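/- arXiv:1904.02416 — 5 statements merged into one kernel-verified Lean document; each statement's English description precedes it below -/
import Mathlib

section
/- Consider a two-sender instance over a finite field F with message parts P_1, P_2, P_{12} partitioning [m], side-information sets K_i, and eavesdropper set A. Partition P_{12} into two disjoint sets P_{12}^{(1)} and P_{12}^{(2)}, and set S̃_j = P_j ∪ P_{12}^{(j)} and Ã_j = A ∩ S̃_j for j ∈ {1,2}. Suppose for each j ∈ {1,2} there is a matrix G̃_j ∈ F^{l_j×|S̃_j|} that is a valid index code for the sub-instance induced on S̃_j (side-information sets K_i ∩ S̃_j for i ∈ S̃_j) and is weakly secure against Ã_j. Then the matrix G whose first l_1 rows are supported on the columns S̃_1 (equal to G̃_1 there, zero elsewhere) and whose last l_2 rows are supported on the columns S̃_2 (equal to G̃_2 there, zero elsewhere) is a valid two-sender linear index code for the full instance (sender 1 transmits the first l_1 rows, sender 2 the last l_2 rows) and is weakly secure against A. -/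
open Matrix Sum

attribute [local instance] Classical.propDecidable

noncomputable section

variable (F : Type*) [Field F] [Fintype F]

/-- The row space of a matrix: the span of its rows. -/
def rowSpace {ρ ι : Type*} (G : Matrix ρ ι F) : Submodule F (ι → F) :=
  Submodule.span F (Set.range fun r j => G r j)

/-- Weak security of the linear code `x ↦ G x` against an eavesdropper knowing `x j` for
`j ∈ A`: for every `i ∉ A` and every `u` supported in `A`, `u + e i` is not in the
row space of `G`. -/
def WeaklySecure {ρ ι : Type*} (G : Matrix ρ ι F) (A : Set ι) : Prop :=
  ∀ i ∉ A, ∀ u : ι → F, (∀ j, u j ≠ 0 → j ∈ A) →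
    u + Pi.single i (1 : F) ∉ rowSpace F G

/-- `G` is a valid index code for side-information sets `K`: every receiver `i` can
decode `x i` from the codeword `G.mulVec x` and its side information `x|_{K i}`. -/
def ValidCode {ρ ι : Type*} [Fintype ι] (K : ι → Set ι) (G : Matrix ρ ι F) : Prop :=
  ∀ i : ι, ∃ D : (ρ → F) → (↥(K i) → F) → F,
    ∀ x : ι → F, D (G.mulVec x) (fun j => x j.1) = x i

/-- `G` has two-sender form for the parts `P1`, `P2`: its rows split into sender-1 rows,
zero on all columns in `P2`, and sender-2 rows, zero on all columns in `P1`. -/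
def TwoSenderForm {ρ ι : Type*} (P1 P2 : Set ι) (G : Matrix ρ ι F) : Prop :=
  ∃ S : Set ρ, (∀ r ∈ S, ∀ j ∈ P2, G r j = 0) ∧ (∀ r ∉ S, ∀ j ∈ P1, G r j = 0)

/-- Achievable lengths of valid weakly secure (single-sender) linear index codes. -/
def oneLens {ι : Type*} [Fintype ι] (K : ι → Set ι) (A : Set ι) : Set ℕ :=
  {l | ∃ G : Matrix (Fin l) ι F, ValidCode F K G ∧ WeaklySecure F G A}

/-- Achievable total lengths of valid weakly secure two-sender linear index codes. -/
def twoLens {ι : Type*} [Fintype ι] (P1 P2 : Set ι) (K : ι → Set ι) (A : Set ι) :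
    Set ℕ :=
  {l | ∃ G : Matrix (Fin l) ι F,
      TwoSenderForm F P1 P2 G ∧ ValidCode F K G ∧ WeaklySecure F G A}

/-- Side-information sets of the sub-instance induced on `S`. -/
def subK {ι : Type*} (K : ι → Set ι) (S : Set ι) : ↥S → Set ↥S :=
  fun i => {j : ↥S | (j : ι) ∈ K (i : ι)}

/-- Extend a matrix with columns indexed by `↥S` to one with columns indexed by `ι`,
filling the new columns with zeros. -/
def extendCols {ρ ι : Type*} (S : Set ι) (G : Matrix ρ ↥S F) : Matrix ρ ι F :=
  Matrix.of fun r => Function.extend (Subtype.val) (G r) (fun _ => 0)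

/-- Zero-pad a matrix with `l` rows to one with `L` rows. -/
def padMat {ι : Type*} (L : ℕ) {l : ℕ} (G : Matrix (Fin l) ι F) : Matrix (Fin L) ι F :=
  Matrix.of fun r j => if h : (r : ℕ) < l then G ⟨(r : ℕ), h⟩ j else 0

/-- Glue two codes on column sets `S1`, `S2` into a single matrix on all columns,
each block of rows supported only on its own column set. -/
def glueTwo {ρ1 ρ2 ι : Type*} (S1 S2 : Set ι)
    (G1 : Matrix ρ1 ↥S1 F) (G2 : Matrix ρ2 ↥S2 F) : Matrix (ρ1 ⊕ ρ2) ι F :=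
  Matrix.of (Sum.elim (fun r => extendCols F S1 G1 r) (fun r => extendCols F S2 G2 r))


lemma extendCols_apply_mem {ρ : Type*} {ι : Type*} (S : Set ι) (G : Matrix ρ ↥S F)
    (r : ρ) (j : ↥S) : extendCols F S G r (j : ι) = G r j := by
  simpa [extendCols] using Subtype.val_injective.extend_apply (G r) (fun _ => 0) j

lemma extendCols_apply_notMem {ρ : Type*} {ι : Type*} (S : Set ι) (G : Matrix ρ ↥S F)
    (r : ρ) {j : ι} (hj : j ∉ S) : extendCols F S G r j = 0 := by
  rw [extendCols]
  exact Function.extend_apply' (G r) (fun _ => 0) j (by rintro ⟨a, rfl⟩; exact hj a.2)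

lemma extend_sum {ι : Type*} [Fintype ι] (S : Set ι) [Fintype ↥S] (f : ↥S → F) (x : ι → F) :
    ∑ j : ι, Function.extend Subtype.val f (fun _ => 0) j * x j
      = ∑ j : ↥S, f j * x (j : ι) := by
  classical
  have h0 : ∀ j ∈ Finset.univ, j ∉ S.toFinset →
      Function.extend Subtype.val f (fun _ => 0) j * x j = 0 := by
    intro j _ hj
    rw [Function.extend_apply' _ _ _
      (by rintro ⟨a, rfl⟩; exact hj (Set.mem_toFinset.mpr a.2))]
    simp
  rw [← Finset.sum_subset (Finset.subset_univ S.toFinset) h0,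
    Finset.sum_subtype S.toFinset (fun j => Set.mem_toFinset)]
  refine Finset.sum_congr rfl fun j _ => ?_
  rw [Subtype.val_injective.extend_apply]

/-- general construction, Theorem 1 of the paper.  Partition the common
part `P12` into `Q1 ∪ Q2`, and set `S̃j = Pj ∪ Qj`.  If `G̃j` is a valid index code for the
sub-instance induced on `S̃j`, weakly secure against `Ãj = A ∩ S̃j`, for `j = 1, 2`, then
the matrix whose first `l1` rows are `G̃1` on the columns `S̃1` (zero elsewhere) and whose
last `l2` rows are `G̃2` on the columns `S̃2` (zero elsewhere) is a valid two-sender linear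
index code (sender 1 transmitting the first `l1` rows, sender 2 the last `l2` rows) for
the full instance, and it is weakly secure against `A`. -/
theorem glueTwo_validCode_and_weaklySecure {m l1 l2 : ℕ}
    (P1 P2 P12 Q1 Q2 : Set (Fin m))
    (h12 : Disjoint P1 P2) (h112 : Disjoint P1 P12) (h212 : Disjoint P2 P12)
    (hcov : P1 ∪ P2 ∪ P12 = Set.univ)
    (hQd : Disjoint Q1 Q2) (hQu : Q1 ∪ Q2 = P12)
    (K : Fin m → Set (Fin m)) (hK : ∀ i, i ∉ K i)
    (A : Set (Fin m)) (hA : A ⊂ Set.univ)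
    (G1 : Matrix (Fin l1) ↥(P1 ∪ Q1) F) (G2 : Matrix (Fin l2) ↥(P2 ∪ Q2) F)
    (hG1v : ValidCode F (subK K (P1 ∪ Q1)) G1)
    (hG1s : WeaklySecure F G1 (Subtype.val ⁻¹' A))
    (hG2v : ValidCode F (subK K (P2 ∪ Q2)) G2)
    (hG2s : WeaklySecure F G2 (Subtype.val ⁻¹' A)) :
    (∀ r : Fin l1, ∀ j ∈ P2, glueTwo F (P1 ∪ Q1) (P2 ∪ Q2) G1 G2 (Sum.inl r) j = 0) ∧
    (∀ r : Fin l2, ∀ j ∈ P1, glueTwo F (P1 ∪ Q1) (P2 ∪ Q2) G1 G2 (Sum.inr r) j = 0) ∧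
    ValidCode F K (glueTwo F (P1 ∪ Q1) (P2 ∪ Q2) G1 G2) ∧
    WeaklySecure F (glueTwo F (P1 ∪ Q1) (P2 ∪ Q2) G1 G2) A := by
  classical
  have hQ1 : Q1 ⊆ P12 := hQu ▸ Set.subset_union_left
  have hQ2 : Q2 ⊆ P12 := hQu ▸ Set.subset_union_right
  have hS : Disjoint (P1 ∪ Q1) (P2 ∪ Q2) := by
    rw [Set.disjoint_union_left]
    exact ⟨Set.disjoint_union_right.mpr ⟨h12, h112.mono_right hQ2⟩,
      Set.disjoint_union_right.mpr ⟨(h212.mono_right hQ1).symm, hQd⟩⟩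
  have hmem : ∀ j : Fin m, j ∈ P1 ∪ Q1 ∨ j ∈ P2 ∪ Q2 := by
    intro j
    have hj : j ∈ P1 ∪ P2 ∪ P12 := hcov ▸ Set.mem_univ j
    rcases hj with (h | h) | h
    · exact Or.inl (Or.inl h)
    · exact Or.inr (Or.inl h)
    · rcases (hQu.symm ▸ h : j ∈ Q1 ∪ Q2) with h | h
      · exact Or.inl (Or.inr h)
      · exact Or.inr (Or.inr h)
  have hz1 : ∀ r : Fin l1, ∀ j ∈ P2, glueTwo F (P1 ∪ Q1) (P2 ∪ Q2) G1 G2 (Sum.inl r) j = 0 := by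
    intro r j hj
    have hj1 : j ∉ P1 ∪ Q1 := Set.disjoint_right.mp hS (Or.inl hj)
    simpa [glueTwo] using extendCols_apply_notMem F (P1 ∪ Q1) G1 r hj1
  have hz2 : ∀ r : Fin l2, ∀ j ∈ P1, glueTwo F (P1 ∪ Q1) (P2 ∪ Q2) G1 G2 (Sum.inr r) j = 0 := by
    intro r j hj
    have hj2 : j ∉ P2 ∪ Q2 := Set.disjoint_left.mp hS (Or.inl hj)
    simpa [glueTwo] using extendCols_apply_notMem F (P2 ∪ Q2) G2 r hj2
  have hmul1 : ∀ (x : Fin m → F) (r : Fin l1),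
      (glueTwo F (P1 ∪ Q1) (P2 ∪ Q2) G1 G2).mulVec x (Sum.inl r)
        = G1.mulVec (fun j => x (j : Fin m)) r := by
    intro x r
    simpa [Matrix.mulVec, dotProduct, glueTwo, extendCols]
      using extend_sum F (P1 ∪ Q1) (G1 r) x
  have hmul2 : ∀ (x : Fin m → F) (r : Fin l2),
      (glueTwo F (P1 ∪ Q1) (P2 ∪ Q2) G1 G2).mulVec x (Sum.inr r)
        = G2.mulVec (fun j => x (j : Fin m)) r := by
    intro x r
    simpa [Matrix.mulVec, dotProduct, glueTwo, extendCols]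
      using extend_sum F (P2 ∪ Q2) (G2 r) x
  have hres : ∀ (S So : Set (Fin m)), Disjoint S So →
      ∀ {l lo : ℕ} (Gs : Matrix (Fin l) ↥S F) (Go : Matrix (Fin lo) ↥So F),
      ∀ v : Fin m → F,
        ((∃ r : Fin l, v = fun j => extendCols F S Gs r j) ∨
         (∃ r : Fin lo, v = fun j => extendCols F So Go r j)) →
        (fun j : ↥S => v (j : Fin m)) ∈ rowSpace F Gs := by
    intro S So hd l lo Gs Go v hv
    rcases hv with ⟨r, rfl⟩ | ⟨r, rfl⟩
    · have : (fun j : ↥S => extendCols F S Gs r (j : Fin m)) = fun j => Gs r j := by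
        funext j; exact extendCols_apply_mem F S Gs r j
      rw [this]; exact Submodule.subset_span ⟨r, rfl⟩
    · have : (fun j : ↥S => extendCols F So Go r (j : Fin m)) = 0 := by
        funext j
        exact extendCols_apply_notMem F So Go r (Set.disjoint_left.mp hd j.2)
      rw [this]; exact (rowSpace F Gs).zero_mem
  have hres1 : ∀ v ∈ rowSpace F (glueTwo F (P1 ∪ Q1) (P2 ∪ Q2) G1 G2),
      (fun j : ↥(P1 ∪ Q1) => v (j : Fin m)) ∈ rowSpace F G1 := by
    intro v hv
    have hle : rowSpace F (glueTwo F (P1 ∪ Q1) (P2 ∪ Q2) G1 G2) ≤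
        (rowSpace F G1).comap
          (LinearMap.funLeft F F (Subtype.val : ↥(P1 ∪ Q1) → Fin m)) := by
      rw [rowSpace, Submodule.span_le]
      rintro _ ⟨r, rfl⟩
      rcases r with r | r
      · exact Submodule.mem_comap.mpr
          (hres (P1 ∪ Q1) (P2 ∪ Q2) hS G1 G2 _ (Or.inl ⟨r, by funext j; rfl⟩))
      · exact Submodule.mem_comap.mpr
          (hres (P1 ∪ Q1) (P2 ∪ Q2) hS G1 G2 _ (Or.inr ⟨r, by funext j; rfl⟩))
    exact hle hv
  have hres2 : ∀ v ∈ rowSpace F (glueTwo F (P1 ∪ Q1) (P2 ∪ Q2) G1 G2),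
      (fun j : ↥(P2 ∪ Q2) => v (j : Fin m)) ∈ rowSpace F G2 := by
    intro v hv
    have hle : rowSpace F (glueTwo F (P1 ∪ Q1) (P2 ∪ Q2) G1 G2) ≤
        (rowSpace F G2).comap
          (LinearMap.funLeft F F (Subtype.val : ↥(P2 ∪ Q2) → Fin m)) := by
      rw [rowSpace, Submodule.span_le]
      rintro _ ⟨r, rfl⟩
      rcases r with r | r
      · exact Submodule.mem_comap.mpr
          (hres (P2 ∪ Q2) (P1 ∪ Q1) hS.symm G2 G1 _ (Or.inr ⟨r, by funext j; rfl⟩))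
      · exact Submodule.mem_comap.mpr
          (hres (P2 ∪ Q2) (P1 ∪ Q1) hS.symm G2 G1 _ (Or.inl ⟨r, by funext j; rfl⟩))
    exact hle hv
  refine ⟨hz1, hz2, ?_, ?_⟩
  · -- validity
    intro i
    rcases hmem i with hi | hi
    · obtain ⟨D, hD⟩ := hG1v ⟨i, hi⟩
      refine ⟨fun c k => D (fun r => c (Sum.inl r)) (fun j => k ⟨(j : ↥(P1 ∪ Q1)), j.2⟩), ?_⟩
      intro x
      have h := hD (fun j => x (j : Fin m))
      show D (fun r => (glueTwo F (P1 ∪ Q1) (P2 ∪ Q2) G1 G2).mulVec x (Sum.inl r)) _ = x i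
      have hfun : (fun r => (glueTwo F (P1 ∪ Q1) (P2 ∪ Q2) G1 G2).mulVec x (Sum.inl r))
          = G1.mulVec (fun j => x (j : Fin m)) := by
        funext r; exact hmul1 x r
      rw [hfun]
      exact h
    · obtain ⟨D, hD⟩ := hG2v ⟨i, hi⟩
      refine ⟨fun c k => D (fun r => c (Sum.inr r)) (fun j => k ⟨(j : ↥(P2 ∪ Q2)), j.2⟩), ?_⟩
      intro x
      have h := hD (fun j => x (j : Fin m))
      show D (fun r => (glueTwo F (P1 ∪ Q1) (P2 ∪ Q2) G1 G2).mulVec x (Sum.inr r)) _ = x i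
      have hfun : (fun r => (glueTwo F (P1 ∪ Q1) (P2 ∪ Q2) G1 G2).mulVec x (Sum.inr r))
          = G2.mulVec (fun j => x (j : Fin m)) := by
        funext r; exact hmul2 x r
      rw [hfun]
      exact h
  · -- weak security
    intro i hi u hu hin
    rcases hmem i with hiS | hiS
    · refine hG1s ⟨i, hiS⟩ hi (fun j => u (j : Fin m)) (fun j hj => hu _ hj) ?_
      have h := hres1 _ hin
      convert h using 1
      funext j
      simp only [Pi.add_apply, Pi.single_apply]
      congr 1
      by_cases hj : (j : Fin m) = i
      · rw [if_pos (Subtype.ext hj), if_pos hj]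
      · rw [if_neg (fun hc => hj (by rw [hc])), if_neg hj]
    · refine hG2s ⟨i, hiS⟩ hi (fun j => u (j : Fin m)) (fun j hj => hu _ hj) ?_
      have h := hres2 _ hin
      convert h using 1
      funext j
      simp only [Pi.add_apply, Pi.single_apply]
      congr 1
      by_cases hj : (j : Fin m) = i
      · rw [if_pos (Subtype.ext hj), if_pos hj]
      · rw [if_neg (fun hc => hj (by rw [hc])), if_neg hj]
end
end

section
/- Consider a two-sender instance over a finite field F with message parts P_1, P_2, P_{12}, side-information sets K_i, and eavesdropper set A with A_T = A ∩ P_T for T ∈ {1, 2, {1,2}}. Suppose for each T there is a matrix G_T ∈ F^{l_T×|P_T|} that is a valid index code for the sub-instance induced on P_T and is weakly secure against A_T. Then the (l_1+l_2+l_{12})×m matrix G obtained by placing G_1, G_2, G_{12} block-diagonally on the column groups P_1, P_2, P_{12} respectively (zeros elsewhere) is a valid weakly secure two-sender linear index code for the full instance against A, where sender 1 transmits the G_1-rows, sender 2 transmits the G_2-rows, and the G_{12}-rows may be transmitted by either sender. -/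
open Matrix Sum

attribute [local instance] Classical.propDecidable

noncomputable section

variable (F : Type*) [Field F] [Fintype F]

/-- Glue three codes on column sets `S1`, `S2`, `S3` into a single matrix on all columns,
each block of rows supported only on its own column set. -/
def glueThree {ρ1 ρ2 ρ3 ι : Type*} (S1 S2 S3 : Set ι)
    (G1 : Matrix ρ1 ↥S1 F) (G2 : Matrix ρ2 ↥S2 F) (G3 : Matrix ρ3 ↥S3 F) :
    Matrix (ρ1 ⊕ ρ2 ⊕ ρ3) ι F :=
  Matrix.of (Sum.elim (fun r => extendCols F S1 G1 r)
    (Sum.elim (fun r => extendCols F S2 G2 r) (fun r => extendCols F S3 G3 r)))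


set_option linter.unusedSectionVars false in
lemma extend_mem {ι : Type*} (S : Set ι) (f : ↥S → F) {j : ι} (h : j ∈ S) :
    Function.extend (Subtype.val : ↥S → ι) f (fun _ => 0) j = f ⟨j, h⟩ := by
  have := Subtype.val_injective.extend_apply f (fun _ => (0:F)) ⟨j, h⟩
  simpa using this

set_option linter.unusedSectionVars false in
lemma extend_not_mem {ι : Type*} (S : Set ι) (f : ↥S → F) {j : ι} (h : j ∉ S) :
    Function.extend (Subtype.val : ↥S → ι) f (fun _ => 0) j = 0 := by
  apply Function.extend_apply'
  rintro ⟨a, rfl⟩; exact h a.2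

set_option linter.unusedSectionVars false in
lemma sum_extend {ι : Type*} [Fintype ι] (S : Set ι) (f : ↥S → F) :
    ∑ j : ι, Function.extend (Subtype.val : ↥S → ι) f (fun _ => 0) j = ∑ a : ↥S, f a := by
  rw [← Finset.sum_subset (Finset.subset_univ S.toFinset)
    (fun x _ hx => extend_not_mem F S f (by simpa using hx))]
  rw [Finset.sum_subtype S.toFinset (fun x => Set.mem_toFinset)
    (Function.extend (Subtype.val : ↥S → ι) f (fun _ => 0))]
  exact Finset.sum_congr rfl fun a _ => extend_mem F S f a.2

set_option linter.unusedSectionVars false in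
lemma mulVec_extendCols {ρ ι : Type*} [Fintype ι] (S : Set ι) (G : Matrix ρ ↥S F)
    (x : ι → F) (r : ρ) :
    (extendCols F S G).mulVec x r = G.mulVec (fun a => x a.1) r := by
  show ∑ j : ι, Function.extend (Subtype.val : ↥S → ι) (G r) (fun _ => 0) j * x j
      = ∑ a : ↥S, G r a * x a.1
  rw [← sum_extend F S (fun a => G r a * x a.1)]
  refine Finset.sum_congr rfl fun j _ => ?_
  by_cases h : j ∈ S
  · rw [extend_mem F S _ h, extend_mem F S _ h]
  · rw [extend_not_mem F S _ h, extend_not_mem F S _ h, zero_mul]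

set_option linter.unusedSectionVars false in
lemma restrict_rowSpace {ρ ρ' ι : Type*} (S : Set ι) (G : Matrix ρ ι F)
    (H : Matrix ρ' ↥S F)
    (h : ∀ r : ρ, (fun a : ↥S => G r a.1) ∈ rowSpace F H)
    {v : ι → F} (hv : v ∈ rowSpace F G) :
    (fun a : ↥S => v a.1) ∈ rowSpace F H := by
  have hmap : (fun a : ↥S => v a.1)
      = LinearMap.funLeft F F (Subtype.val : ↥S → ι) v := rfl
  rw [hmap]
  have hle : Submodule.map (LinearMap.funLeft F F (Subtype.val : ↥S → ι)) (rowSpace F G)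
      ≤ rowSpace F H := by
    rw [rowSpace, Submodule.map_span, Submodule.span_le]
    rintro _ ⟨_, ⟨r, rfl⟩, rfl⟩
    exact h r
  exact hle (Submodule.mem_map_of_mem hv)

set_option linter.unusedSectionVars false in
lemma single_restrict {ι : Type*} (S : Set ι) [DecidableEq ι] [DecidableEq ↥S]
    {i : ι} (hi : i ∈ S) (a : ↥S) :
    (Pi.single (⟨i, hi⟩ : ↥S) (1 : F) : ↥S → F) a = (Pi.single i (1 : F) : ι → F) a.1 := by
  by_cases h : a = ⟨i, hi⟩
  · subst h; simp
  · rw [Pi.single_eq_of_ne h, Pi.single_eq_of_ne (fun hv => h (Subtype.ext hv))]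

/-- naive scheme.  If `G_T` is a valid index code for the sub-instance
induced on `P_T`, weakly secure against `A_T = A ∩ P_T`, for each `T ∈ {1, 2, {1,2}}`,
then placing `G1, G2, G12` block-diagonally on the column groups `P1, P2, P12` gives a
valid weakly secure two-sender linear index code against `A`: the `G1`-rows vanish on
`P2`, the `G2`-rows vanish on `P1`, and the `G12`-rows vanish on `P1 ∪ P2` (so they can
be transmitted by either sender). -/
theorem glueThree_validCode_and_weaklySecure {m l1 l2 l12 : ℕ}
    (P1 P2 P12 : Set (Fin m))
    (h12 : Disjoint P1 P2) (h112 : Disjoint P1 P12) (h212 : Disjoint P2 P12)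
    (hcov : P1 ∪ P2 ∪ P12 = Set.univ)
    (K : Fin m → Set (Fin m)) (hK : ∀ i, i ∉ K i)
    (A : Set (Fin m)) (hA : A ⊂ Set.univ)
    (G1 : Matrix (Fin l1) ↥P1 F) (G2 : Matrix (Fin l2) ↥P2 F)
    (G12 : Matrix (Fin l12) ↥P12 F)
    (hG1v : ValidCode F (subK K P1) G1)
    (hG1s : WeaklySecure F G1 (Subtype.val ⁻¹' A))
    (hG2v : ValidCode F (subK K P2) G2)
    (hG2s : WeaklySecure F G2 (Subtype.val ⁻¹' A))
    (hG12v : ValidCode F (subK K P12) G12)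
    (hG12s : WeaklySecure F G12 (Subtype.val ⁻¹' A)) :
    (∀ r : Fin l1, ∀ j ∈ P2, glueThree F P1 P2 P12 G1 G2 G12 (Sum.inl r) j = 0) ∧
    (∀ r : Fin l2, ∀ j ∈ P1,
      glueThree F P1 P2 P12 G1 G2 G12 (Sum.inr (Sum.inl r)) j = 0) ∧
    (∀ r : Fin l12, ∀ j ∈ P1 ∪ P2,
      glueThree F P1 P2 P12 G1 G2 G12 (Sum.inr (Sum.inr r)) j = 0) ∧
    TwoSenderForm F P1 P2 (glueThree F P1 P2 P12 G1 G2 G12) ∧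
    ValidCode F K (glueThree F P1 P2 P12 G1 G2 G12) ∧
    WeaklySecure F (glueThree F P1 P2 P12 G1 G2 G12) A := by
    classical
  set G := glueThree F P1 P2 P12 G1 G2 G12 with hG
  have hrow1 : ∀ r : Fin l1, ∀ j ∈ P2, G (Sum.inl r) j = 0 := fun r j hj =>
    extend_not_mem F P1 (G1 r) (fun h => Set.disjoint_left.mp h12 h hj)
  have hrow2 : ∀ r : Fin l2, ∀ j ∈ P1, G (Sum.inr (Sum.inl r)) j = 0 := fun r j hj =>
    extend_not_mem F P2 (G2 r) (fun h => Set.disjoint_left.mp h12 hj h)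
  have hrow3 : ∀ r : Fin l12, ∀ j ∈ P1 ∪ P2, G (Sum.inr (Sum.inr r)) j = 0 := by
    rintro r j (hj | hj)
    · exact extend_not_mem F P12 (G12 r) (fun h => Set.disjoint_left.mp h112 hj h)
    · exact extend_not_mem F P12 (G12 r) (fun h => Set.disjoint_left.mp h212 hj h)
  refine ⟨hrow1, hrow2, hrow3, ?_, ?_, ?_⟩
  · -- TwoSenderForm
    refine ⟨Set.range Sum.inl ∪ Set.range (Sum.inr ∘ Sum.inr), ?_, ?_⟩
    · rintro r (⟨r, rfl⟩ | ⟨r, rfl⟩) j hj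
      · exact hrow1 r j hj
      · exact hrow3 r j (Or.inr hj)
    · rintro (r | r | r) hr j hj
      · exact absurd (Or.inl ⟨r, rfl⟩) hr
      · exact hrow2 r j hj
      · exact absurd (Or.inr ⟨r, rfl⟩) hr
  · -- ValidCode
    intro i
    have hi : i ∈ P1 ∪ P2 ∪ P12 := hcov.symm ▸ Set.mem_univ i
    rcases hi with (h1 | h2) | h3
    · obtain ⟨D, hD⟩ := hG1v ⟨i, h1⟩
      refine ⟨fun y s => D (fun r => y (Sum.inl r)) (fun j => s ⟨j.1.1, j.2⟩), fun x => ?_⟩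
      have key : (fun r => G.mulVec x (Sum.inl r)) = G1.mulVec (fun a => x a.1) :=
        funext fun r => mulVec_extendCols F P1 G1 x r
      show D (fun r => G.mulVec x (Sum.inl r)) _ = x i
      rw [key]
      exact hD (fun a : ↥P1 => x a.1)
    · obtain ⟨D, hD⟩ := hG2v ⟨i, h2⟩
      refine ⟨fun y s => D (fun r => y (Sum.inr (Sum.inl r))) (fun j => s ⟨j.1.1, j.2⟩),
        fun x => ?_⟩
      have key : (fun r => G.mulVec x (Sum.inr (Sum.inl r))) = G2.mulVec (fun a => x a.1) :=
        funext fun r => mulVec_extendCols F P2 G2 x r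
      show D (fun r => G.mulVec x (Sum.inr (Sum.inl r))) _ = x i
      rw [key]
      exact hD (fun a : ↥P2 => x a.1)
    · obtain ⟨D, hD⟩ := hG12v ⟨i, h3⟩
      refine ⟨fun y s => D (fun r => y (Sum.inr (Sum.inr r))) (fun j => s ⟨j.1.1, j.2⟩),
        fun x => ?_⟩
      have key : (fun r => G.mulVec x (Sum.inr (Sum.inr r))) = G12.mulVec (fun a => x a.1) :=
        funext fun r => mulVec_extendCols F P12 G12 x r
      show D (fun r => G.mulVec x (Sum.inr (Sum.inr r))) _ = x i
      rw [key]
      exact hD (fun a : ↥P12 => x a.1)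
  · -- WeaklySecure
    intro i hiA u hu hmem
    have hi : i ∈ P1 ∪ P2 ∪ P12 := hcov.symm ▸ Set.mem_univ i
    rcases hi with (h1 | h2) | h3
    · refine hG1s ⟨i, h1⟩ hiA (fun a => u a.1) (fun a ha => hu a.1 ha) ?_
      have hrows : ∀ r, (fun a : ↥P1 => G r a.1) ∈ rowSpace F G1 := by
        rintro (r | r | r)
        · have : (fun a : ↥P1 => G (Sum.inl r) a.1) = fun a => G1 r a := by
            funext a; exact extend_mem F P1 (G1 r) a.2
          rw [this]; exact Submodule.subset_span ⟨r, rfl⟩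
        · have : (fun a : ↥P1 => G (Sum.inr (Sum.inl r)) a.1) = 0 := by
            funext a; exact hrow2 r a.1 a.2
          rw [this]; exact Submodule.zero_mem _
        · have : (fun a : ↥P1 => G (Sum.inr (Sum.inr r)) a.1) = 0 := by
            funext a; exact hrow3 r a.1 (Or.inl a.2)
          rw [this]; exact Submodule.zero_mem _
      have key := restrict_rowSpace F P1 G G1 hrows hmem
      convert key using 1
      funext a
      simp only [Pi.add_apply]
      congr 1
      simp only [Pi.single_apply, Subtype.ext_iff]
      congr
    · refine hG2s ⟨i, h2⟩ hiA (fun a => u a.1) (fun a ha => hu a.1 ha) ?_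
      have hrows : ∀ r, (fun a : ↥P2 => G r a.1) ∈ rowSpace F G2 := by
        rintro (r | r | r)
        · have : (fun a : ↥P2 => G (Sum.inl r) a.1) = 0 := by
            funext a; exact hrow1 r a.1 a.2
          rw [this]; exact Submodule.zero_mem _
        · have : (fun a : ↥P2 => G (Sum.inr (Sum.inl r)) a.1) = fun a => G2 r a := by
            funext a; exact extend_mem F P2 (G2 r) a.2
          rw [this]; exact Submodule.subset_span ⟨r, rfl⟩
        · have : (fun a : ↥P2 => G (Sum.inr (Sum.inr r)) a.1) = 0 := by
            funext a; exact hrow3 r a.1 (Or.inr a.2)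
          rw [this]; exact Submodule.zero_mem _
      have key := restrict_rowSpace F P2 G G2 hrows hmem
      convert key using 1
      funext a
      simp only [Pi.add_apply]
      congr 1
      simp only [Pi.single_apply, Subtype.ext_iff]
      congr
    · refine hG12s ⟨i, h3⟩ hiA (fun a => u a.1) (fun a ha => hu a.1 ha) ?_
      have hrows : ∀ r, (fun a : ↥P12 => G r a.1) ∈ rowSpace F G12 := by
        rintro (r | r | r)
        · have : (fun a : ↥P12 => G (Sum.inl r) a.1) = 0 := by
            funext a; exact extend_not_mem F P1 (G1 r)
              (fun h => Set.disjoint_left.mp h112 h a.2)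
          rw [this]; exact Submodule.zero_mem _
        · have : (fun a : ↥P12 => G (Sum.inr (Sum.inl r)) a.1) = 0 := by
            funext a; exact extend_not_mem F P2 (G2 r)
              (fun h => Set.disjoint_left.mp h212 h a.2)
          rw [this]; exact Submodule.zero_mem _
        · have : (fun a : ↥P12 => G (Sum.inr (Sum.inr r)) a.1) = fun a => G12 r a := by
            funext a; exact extend_mem F P12 (G12 r) a.2
          rw [this]; exact Submodule.subset_span ⟨r, rfl⟩
      have key := restrict_rowSpace F P12 G G12 hrows hmem
      convert key using 1
      funext a
      simp only [Pi.add_apply]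
      congr 1
      simp only [Pi.single_apply, Subtype.ext_iff]
      congr
end
end

section
/- Consider a two-sender instance over a finite field F with parts P_1, P_2, P_{12}, side-information sets K_i, and eavesdropper set A with A_T = A ∩ P_T. Assume the interactions between each P_j (j = 1,2) and P_{12} are fully participated in both directions: P_{12} ⊆ K_i for every i ∈ P_1 ∪ P_2, and P_1 ∪ P_2 ⊆ K_j for every j ∈ P_{12}. Suppose for each T ∈ {1, 2, {1,2}} there exists a matrix G_T ∈ F^{l_T×|P_T|} that is a valid index code for the sub-instance induced on P_T and weakly secure against A_T. Then there exists a valid weakly secure two-sender linear index code for the full instance of total length max{l_{12}, l_1 + l_2}. In particular, the optimal two-sender codelength satisfies l* ≤ max{l*_{12}, l*_1 + l*_2}. -/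
open Matrix Sum

attribute [local instance] Classical.propDecidable

noncomputable section

variable (F : Type*) [Field F] [Fintype F]

set_option linter.unusedSectionVars false

/-! ### Auxiliary machinery for the construction -/

/-- The `n`-th row of `G`, as a function, zero if `n` is out of range. -/
def rowOf {l : ℕ} {ι : Type*} (G : Matrix (Fin l) ι F) (n : ℕ) : ι → F :=
  if h : n < l then G ⟨n, h⟩ else 0

lemma rowOf_mem {l : ℕ} {ι : Type*} (G : Matrix (Fin l) ι F) (n : ℕ) :
    rowOf F G n ∈ rowSpace F G := by
  unfold rowOf
  split
  · exact Submodule.subset_span ⟨_, rfl⟩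
  · exact Submodule.zero_mem _

lemma rowOf_lt {l : ℕ} {ι : Type*} (G : Matrix (Fin l) ι F) (r : Fin l) :
    rowOf F G (r : ℕ) = G r := by
  unfold rowOf
  rw [dif_pos r.2]

lemma rowOf_ge {l : ℕ} {ι : Type*} (G : Matrix (Fin l) ι F) (n : ℕ) (h : l ≤ n) :
    rowOf F G n = 0 := dif_neg (by omega)

/-- The `(n - off)`-th row of `G` if `off ≤ n`, otherwise zero. -/
def shiftRowOf {l : ℕ} {ι : Type*} (G : Matrix (Fin l) ι F) (off n : ℕ) : ι → F :=
  if off ≤ n then rowOf F G (n - off) else 0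

lemma shiftRowOf_mem {l : ℕ} {ι : Type*} (G : Matrix (Fin l) ι F) (off n : ℕ) :
    shiftRowOf F G off n ∈ rowSpace F G := by
  unfold shiftRowOf
  split
  · exact rowOf_mem F G _
  · exact Submodule.zero_mem _

lemma shiftRowOf_lt {l : ℕ} {ι : Type*} (G : Matrix (Fin l) ι F) (off : ℕ) (r : Fin l) :
    shiftRowOf F G off (off + (r : ℕ)) = G r := by
  unfold shiftRowOf
  rw [if_pos (Nat.le_add_right _ _)]
  rw [Nat.add_sub_cancel_left]
  exact rowOf_lt F G r

lemma shiftRowOf_of_lt {l : ℕ} {ι : Type*} (G : Matrix (Fin l) ι F) (off n : ℕ)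
    (h : n < off) : shiftRowOf F G off n = 0 := if_neg (by omega)

lemma sum_dite_mem {m : ℕ} (P : Set (Fin m)) (g : ↥P → F) :
    ∑ j : Fin m, (if h : j ∈ P then g ⟨j, h⟩ else 0) = ∑ j : ↥P, g j := by
  rw [← Finset.sum_filter_of_ne (p := fun j => j ∈ P)
      (fun x _ hx => by by_contra h; simp [h] at hx)]
  rw [Finset.sum_subtype (p := fun j => j ∈ P) (Finset.univ.filter (· ∈ P)) (by simp)
      (fun j => if h : j ∈ P then g ⟨j, h⟩ else 0)]
  exact Finset.sum_congr rfl fun j _ => by simp [j.2]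

lemma single_comp {m : ℕ} (P : Set (Fin m)) (i : Fin m) (hi : i ∈ P) :
    (fun j : ↥P => (Pi.single i (1 : F) : Fin m → F) j) = (Pi.single (⟨i, hi⟩ : ↥P) (1 : F) : ↥P → F) := by
  funext j
  rw [Pi.single_apply, Pi.single_apply]
  simp [Subtype.ext_iff]

/-- The combined two-sender matrix. -/
def bigG {m l1 l2 l12 : ℕ} (P1 P2 P12 : Set (Fin m))
    (G1 : Matrix (Fin l1) ↥P1 F) (G2 : Matrix (Fin l2) ↥P2 F)
    (G12 : Matrix (Fin l12) ↥P12 F) :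
    Matrix (Fin (max l12 (l1 + l2))) (Fin m) F :=
  Matrix.of fun r j =>
    (if h : j ∈ P1 then rowOf F G1 (r : ℕ) ⟨j, h⟩ else 0)
    + (if h : j ∈ P2 then shiftRowOf F G2 l1 (r : ℕ) ⟨j, h⟩ else 0)
    + (if h : j ∈ P12 then rowOf F G12 (r : ℕ) ⟨j, h⟩ else 0)

section BigG

variable {m l1 l2 l12 : ℕ} {P1 P2 P12 : Set (Fin m)}
  {G1 : Matrix (Fin l1) ↥P1 F} {G2 : Matrix (Fin l2) ↥P2 F}
  {G12 : Matrix (Fin l12) ↥P12 F}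

lemma bigG_mulVec (x : Fin m → F) (r : Fin (max l12 (l1 + l2))) :
    (bigG F P1 P2 P12 G1 G2 G12).mulVec x r =
      (∑ j : ↥P1, rowOf F G1 (r : ℕ) j * x j)
      + (∑ j : ↥P2, shiftRowOf F G2 l1 (r : ℕ) j * x j)
      + (∑ j : ↥P12, rowOf F G12 (r : ℕ) j * x j) := by
  have e : ∀ (P : Set (Fin m)) (g : ↥P → F),
      ∑ j : Fin m, (if h : j ∈ P then g ⟨j, h⟩ else 0) * x j
        = ∑ j : ↥P, g j * x j := by
    intro P g
    rw [← sum_dite_mem F P (fun j => g j * x j.1)]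
    exact Finset.sum_congr rfl fun j _ => by split <;> simp
  simp only [Matrix.mulVec, dotProduct, bigG, Matrix.of_apply, add_mul,
    Finset.sum_add_distrib]
  rw [e P1 (fun j => rowOf F G1 (r : ℕ) j), e P2 (fun j => shiftRowOf F G2 l1 (r : ℕ) j),
    e P12 (fun j => rowOf F G12 (r : ℕ) j)]

lemma bigG_row_P1 (h12 : Disjoint P1 P2) (h112 : Disjoint P1 P12)
    (r : Fin (max l12 (l1 + l2))) :
    (fun j : ↥P1 => bigG F P1 P2 P12 G1 G2 G12 r j) = rowOf F G1 (r : ℕ) := by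
  funext j
  have := Set.disjoint_left.mp h12 j.2
  have := Set.disjoint_left.mp h112 j.2
  simp_all [bigG]

lemma bigG_row_P2 (h12 : Disjoint P1 P2) (h212 : Disjoint P2 P12)
    (r : Fin (max l12 (l1 + l2))) :
    (fun j : ↥P2 => bigG F P1 P2 P12 G1 G2 G12 r j) = shiftRowOf F G2 l1 (r : ℕ) := by
  funext j
  have := Set.disjoint_right.mp h12 j.2
  have := Set.disjoint_left.mp h212 j.2
  simp_all [bigG]

lemma bigG_row_P12 (h112 : Disjoint P1 P12) (h212 : Disjoint P2 P12)
    (r : Fin (max l12 (l1 + l2))) :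
    (fun j : ↥P12 => bigG F P1 P2 P12 G1 G2 G12 r j) = rowOf F G12 (r : ℕ) := by
  funext j
  have := Set.disjoint_right.mp h112 j.2
  have := Set.disjoint_right.mp h212 j.2
  simp_all [bigG]

end BigG

/-- The combined code is two-sender, valid, and weakly secure. -/
lemma bigG_spec {m l1 l2 l12 : ℕ} (P1 P2 P12 : Set (Fin m))
    (h12 : Disjoint P1 P2) (h112 : Disjoint P1 P12) (h212 : Disjoint P2 P12)
    (hcov : P1 ∪ P2 ∪ P12 = Set.univ)
    (K : Fin m → Set (Fin m))
    (hfull1 : ∀ i ∈ P1 ∪ P2, P12 ⊆ K i)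
    (hfull2 : ∀ j ∈ P12, P1 ∪ P2 ⊆ K j)
    (A : Set (Fin m))
    (G1 : Matrix (Fin l1) ↥P1 F) (G2 : Matrix (Fin l2) ↥P2 F)
    (G12 : Matrix (Fin l12) ↥P12 F)
    (hG1v : ValidCode F (subK K P1) G1)
    (hG1s : WeaklySecure F G1 (Subtype.val ⁻¹' A))
    (hG2v : ValidCode F (subK K P2) G2)
    (hG2s : WeaklySecure F G2 (Subtype.val ⁻¹' A))
    (hG12v : ValidCode F (subK K P12) G12)
    (hG12s : WeaklySecure F G12 (Subtype.val ⁻¹' A)) :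
    TwoSenderForm F P1 P2 (bigG F P1 P2 P12 G1 G2 G12) ∧
    ValidCode F K (bigG F P1 P2 P12 G1 G2 G12) ∧
    WeaklySecure F (bigG F P1 P2 P12 G1 G2 G12) A := by
  refine ⟨?_, ?_, ?_⟩
  · -- two-sender form
    refine ⟨{r | (r : ℕ) < l1}, fun r hr j hj => ?_, fun r hr j hj => ?_⟩
    · have hj1 := Set.disjoint_right.mp h12 hj
      have hj12 := Set.disjoint_left.mp h212 hj
      have h0 : shiftRowOf F G2 l1 (r : ℕ) = 0 := shiftRowOf_of_lt F G2 l1 _ hr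
      simp [bigG, hj1, hj12, hj, h0]
    · have hj2 := Set.disjoint_left.mp h12 hj
      have hj12 := Set.disjoint_left.mp h112 hj
      have h0 : rowOf F G1 (r : ℕ) = 0 := rowOf_ge F G1 _ (Nat.le_of_not_lt hr)
      simp [bigG, hj2, hj12, hj, h0]
  · -- validity
    intro i
    have hicov : i ∈ P1 ∪ P2 ∪ P12 := by rw [hcov]; exact Set.mem_univ i
    rcases hicov with (hi | hi) | hi
    · obtain ⟨D1, hD1⟩ := hG1v ⟨i, hi⟩
      have hl1 : l1 ≤ max l12 (l1 + l2) :=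
        le_trans (Nat.le_add_right l1 l2) (le_max_right _ _)
      refine ⟨fun y s => D1 (fun r : Fin l1 => y ⟨(r : ℕ), lt_of_lt_of_le r.2 hl1⟩
          - ∑ j : ↥P12, rowOf F G12 (r : ℕ) j * s ⟨j.1, hfull1 i (Or.inl hi) j.2⟩)
          (fun j => s ⟨j.1.1, j.2⟩), fun x => ?_⟩
      have key : ∀ r : Fin l1,
          (bigG F P1 P2 P12 G1 G2 G12).mulVec x ⟨(r : ℕ), lt_of_lt_of_le r.2 hl1⟩
            - ∑ j : ↥P12, rowOf F G12 (r : ℕ) j * x j.1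
            = G1.mulVec (fun j : ↥P1 => x j) r := by
        intro r
        rw [bigG_mulVec]
        show (∑ j : ↥P1, rowOf F G1 (r : ℕ) j * x j)
            + (∑ j : ↥P2, shiftRowOf F G2 l1 (r : ℕ) j * x j)
            + (∑ j : ↥P12, rowOf F G12 (r : ℕ) j * x j)
            - ∑ j : ↥P12, rowOf F G12 (r : ℕ) j * x j.1 = _
        rw [shiftRowOf_of_lt F G2 l1 _ r.2, rowOf_lt F G1 r]
        simp [Matrix.mulVec, dotProduct]
      have harg := funext key
      convert hD1 (fun j : ↥P1 => x j) using 2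
    · obtain ⟨D2, hD2⟩ := hG2v ⟨i, hi⟩
      have hl2 : ∀ r : Fin l2, l1 + (r : ℕ) < max l12 (l1 + l2) :=
        fun r => lt_of_lt_of_le (by omega) (le_max_right _ _)
      refine ⟨fun y s => D2 (fun r : Fin l2 => y ⟨l1 + (r : ℕ), hl2 r⟩
          - ∑ j : ↥P12, rowOf F G12 (l1 + (r : ℕ)) j * s ⟨j.1, hfull1 i (Or.inr hi) j.2⟩)
          (fun j => s ⟨j.1.1, j.2⟩), fun x => ?_⟩
      have key : ∀ r : Fin l2,
          (bigG F P1 P2 P12 G1 G2 G12).mulVec x ⟨l1 + (r : ℕ), hl2 r⟩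
            - ∑ j : ↥P12, rowOf F G12 (l1 + (r : ℕ)) j * x j.1
            = G2.mulVec (fun j : ↥P2 => x j) r := by
        intro r
        rw [bigG_mulVec]
        show (∑ j : ↥P1, rowOf F G1 (l1 + (r : ℕ)) j * x j)
            + (∑ j : ↥P2, shiftRowOf F G2 l1 (l1 + (r : ℕ)) j * x j)
            + (∑ j : ↥P12, rowOf F G12 (l1 + (r : ℕ)) j * x j)
            - ∑ j : ↥P12, rowOf F G12 (l1 + (r : ℕ)) j * x j.1 = _
        rw [shiftRowOf_lt F G2 l1 r, rowOf_ge F G1 _ (Nat.le_add_right l1 (r : ℕ))]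
        simp [Matrix.mulVec, dotProduct]
      have harg := funext key
      convert hD2 (fun j : ↥P2 => x j) using 2
    · obtain ⟨D12, hD12⟩ := hG12v ⟨i, hi⟩
      have hl12 : l12 ≤ max l12 (l1 + l2) := le_max_left _ _
      refine ⟨fun y s => D12 (fun r : Fin l12 => y ⟨(r : ℕ), lt_of_lt_of_le r.2 hl12⟩
          - ∑ j : ↥P1, rowOf F G1 (r : ℕ) j * s ⟨j.1, hfull2 i hi (Or.inl j.2)⟩
          - ∑ j : ↥P2, shiftRowOf F G2 l1 (r : ℕ) j * s ⟨j.1, hfull2 i hi (Or.inr j.2)⟩)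
          (fun j => s ⟨j.1.1, j.2⟩), fun x => ?_⟩
      have key : ∀ r : Fin l12,
          (bigG F P1 P2 P12 G1 G2 G12).mulVec x ⟨(r : ℕ), lt_of_lt_of_le r.2 hl12⟩
            - ∑ j : ↥P1, rowOf F G1 (r : ℕ) j * x j.1
            - ∑ j : ↥P2, shiftRowOf F G2 l1 (r : ℕ) j * x j.1
            = G12.mulVec (fun j : ↥P12 => x j) r := by
        intro r
        rw [bigG_mulVec]
        show (∑ j : ↥P1, rowOf F G1 (r : ℕ) j * x j)
            + (∑ j : ↥P2, shiftRowOf F G2 l1 (r : ℕ) j * x j)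
            + (∑ j : ↥P12, rowOf F G12 (r : ℕ) j * x j)
            - ∑ j : ↥P1, rowOf F G1 (r : ℕ) j * x j.1
            - ∑ j : ↥P2, shiftRowOf F G2 l1 (r : ℕ) j * x j.1 = _
        rw [rowOf_lt F G12 r]
        simp only [Matrix.mulVec, dotProduct]
        ring
      have harg := funext key
      convert hD12 (fun j : ↥P12 => x j) using 2
  · -- weak security
    intro i hiA u hu hmem
    have hicov : i ∈ P1 ∪ P2 ∪ P12 := by rw [hcov]; exact Set.mem_univ i
    rcases hicov with (hi | hi) | hi
    · have h1 := Submodule.apply_mem_span_image_of_mem_span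
        (LinearMap.funLeft F F (Subtype.val : ↥P1 → Fin m)) hmem
      have h2 : Submodule.span F
          (LinearMap.funLeft F F (Subtype.val : ↥P1 → Fin m) ''
            (Set.range fun r j => bigG F P1 P2 P12 G1 G2 G12 r j)) ≤ rowSpace F G1 := by
        rw [Submodule.span_le]
        rintro _ ⟨_, ⟨r, rfl⟩, rfl⟩
        have h : LinearMap.funLeft F F (Subtype.val : ↥P1 → Fin m)
            (fun j => bigG F P1 P2 P12 G1 G2 G12 r j) = rowOf F G1 (r : ℕ) :=
          bigG_row_P1 F h12 h112 r
        rw [h]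
        exact rowOf_mem F G1 _
      have h3 := h2 h1
      refine hG1s ⟨i, hi⟩ (fun h => hiA h) (fun j => u j.1) (fun j hj => hu j.1 hj) ?_
      convert h3 using 2
      funext j
      simp [Pi.single_apply, Subtype.ext_iff]
    · have h1 := Submodule.apply_mem_span_image_of_mem_span
        (LinearMap.funLeft F F (Subtype.val : ↥P2 → Fin m)) hmem
      have h2 : Submodule.span F
          (LinearMap.funLeft F F (Subtype.val : ↥P2 → Fin m) ''
            (Set.range fun r j => bigG F P1 P2 P12 G1 G2 G12 r j)) ≤ rowSpace F G2 := by
        rw [Submodule.span_le]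
        rintro _ ⟨_, ⟨r, rfl⟩, rfl⟩
        have h : LinearMap.funLeft F F (Subtype.val : ↥P2 → Fin m)
            (fun j => bigG F P1 P2 P12 G1 G2 G12 r j) = shiftRowOf F G2 l1 (r : ℕ) :=
          bigG_row_P2 F h12 h212 r
        rw [h]
        exact shiftRowOf_mem F G2 _ _
      have h3 := h2 h1
      refine hG2s ⟨i, hi⟩ (fun h => hiA h) (fun j => u j.1) (fun j hj => hu j.1 hj) ?_
      convert h3 using 2
      funext j
      simp [Pi.single_apply, Subtype.ext_iff]
    · have h1 := Submodule.apply_mem_span_image_of_mem_span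
        (LinearMap.funLeft F F (Subtype.val : ↥P12 → Fin m)) hmem
      have h2 : Submodule.span F
          (LinearMap.funLeft F F (Subtype.val : ↥P12 → Fin m) ''
            (Set.range fun r j => bigG F P1 P2 P12 G1 G2 G12 r j)) ≤ rowSpace F G12 := by
        rw [Submodule.span_le]
        rintro _ ⟨_, ⟨r, rfl⟩, rfl⟩
        have h : LinearMap.funLeft F F (Subtype.val : ↥P12 → Fin m)
            (fun j => bigG F P1 P2 P12 G1 G2 G12 r j) = rowOf F G12 (r : ℕ) :=
          bigG_row_P12 F h112 h212 r
        rw [h]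
        exact rowOf_mem F G12 _
      have h3 := h2 h1
      refine hG12s ⟨i, hi⟩ (fun h => hiA h) (fun j => u j.1) (fun j hj => hu j.1 hj) ?_
      convert h3 using 2
      funext j
      simp [Pi.single_apply, Subtype.ext_iff]

/-- Case II-B, Theorem 3 of the paper.  Suppose the interactions between
each `Pj` (`j = 1,2`) and `P12` are fully participated in both directions, and valid
weakly secure codes of lengths `l1, l2, l12` exist for the three sub-instances.  Then
there is a valid weakly secure two-sender linear index code for the full instance of
total length `max {l12, l1 + l2}`; in particular the optimal two-sender codelength is at
most `max {l*₁₂, l*₁ + l*₂}`. -/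
theorem caseIIB_exists_code {m l1 l2 l12 : ℕ}
    (P1 P2 P12 : Set (Fin m))
    (h12 : Disjoint P1 P2) (h112 : Disjoint P1 P12) (h212 : Disjoint P2 P12)
    (hcov : P1 ∪ P2 ∪ P12 = Set.univ)
    (K : Fin m → Set (Fin m)) (hK : ∀ i, i ∉ K i)
    (hfull1 : ∀ i ∈ P1 ∪ P2, P12 ⊆ K i)
    (hfull2 : ∀ j ∈ P12, P1 ∪ P2 ⊆ K j)
    (A : Set (Fin m)) (hA : A ⊂ Set.univ)
    (G1 : Matrix (Fin l1) ↥P1 F) (G2 : Matrix (Fin l2) ↥P2 F)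
    (G12 : Matrix (Fin l12) ↥P12 F)
    (hG1v : ValidCode F (subK K P1) G1)
    (hG1s : WeaklySecure F G1 (Subtype.val ⁻¹' A))
    (hG2v : ValidCode F (subK K P2) G2)
    (hG2s : WeaklySecure F G2 (Subtype.val ⁻¹' A))
    (hG12v : ValidCode F (subK K P12) G12)
    (hG12s : WeaklySecure F G12 (Subtype.val ⁻¹' A)) :
    (∃ G : Matrix (Fin (max l12 (l1 + l2))) (Fin m) F,
        TwoSenderForm F P1 P2 G ∧ ValidCode F K G ∧ WeaklySecure F G A) ∧
    sInf (twoLens F P1 P2 K A) ≤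
      max (sInf (oneLens F (subK K P12) (Subtype.val ⁻¹' A)))
        (sInf (oneLens F (subK K P1) (Subtype.val ⁻¹' A)) +
          sInf (oneLens F (subK K P2) (Subtype.val ⁻¹' A))) := by

  refine ⟨⟨bigG F P1 P2 P12 G1 G2 G12, bigG_spec F P1 P2 P12 h12 h112 h212 hcov K
      hfull1 hfull2 A G1 G2 G12 hG1v hG1s hG2v hG2s hG12v hG12s⟩, ?_⟩
  obtain ⟨G1', h1v, h1s⟩ := Nat.sInf_mem
    (⟨l1, G1, hG1v, hG1s⟩ : (oneLens F (subK K P1) (Subtype.val ⁻¹' A)).Nonempty)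
  obtain ⟨G2', h2v, h2s⟩ := Nat.sInf_mem
    (⟨l2, G2, hG2v, hG2s⟩ : (oneLens F (subK K P2) (Subtype.val ⁻¹' A)).Nonempty)
  obtain ⟨G12', h12v', h12s'⟩ := Nat.sInf_mem
    (⟨l12, G12, hG12v, hG12s⟩ : (oneLens F (subK K P12) (Subtype.val ⁻¹' A)).Nonempty)
  exact Nat.sInf_le ⟨bigG F P1 P2 P12 G1' G2' G12', bigG_spec F P1 P2 P12 h12 h112 h212
    hcov K hfull1 hfull2 A G1' G2' G12' h1v h1s h2v h2s h12v' h12s'⟩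
end
end

section
/- Consider a two-sender instance over a finite field F in which the common part is empty, P_{12} = ∅, so [m] = P_1 ∪ P_2, with arbitrary side-information sets K_i ⊆ [m]\{i} (possibly containing cross indices) and eavesdropper set A = A_1 ∪ A_2 with A_j = A ∩ P_j. For j ∈ {1,2} let l*_j be the minimal length of a valid weakly secure single-sender linear code over F for the sub-instance induced on P_j (side-information K_i ∩ P_j for i ∈ P_j, eavesdropper A_j), assumed to exist. Then the optimal two-sender codelength satisfies l* = l*_1 + l*_2; i.e., cross side information gives no advantage when each sender's transmission can depend only on its own exclusive messages. -/
open Matrix Sum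

attribute [local instance] Classical.propDecidable

noncomputable section

variable (F : Type*) [Field F] [Fintype F]

section Helpers

variable {ι : Type*}

lemma ext_mem {S : Set ι} (g : ↥S → F) {j : ι} (hj : j ∈ S) :
    Function.extend Subtype.val g (fun _ => 0) j = g ⟨j, hj⟩ :=
  Subtype.val_injective.extend_apply g (fun _ => 0) ⟨j, hj⟩

lemma ext_not_mem {S : Set ι} (g : ↥S → F) {j : ι} (hj : j ∉ S) :
    Function.extend Subtype.val g (fun _ => 0) j = 0 :=
  Function.extend_apply' _ _ _ (by rintro ⟨a, rfl⟩; exact hj a.2)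

lemma extendCols_mem {ρ : Type*} (S : Set ι) (G : Matrix ρ ↥S F) (r : ρ) {j : ι}
    (hj : j ∈ S) : extendCols F S G r j = G r ⟨j, hj⟩ :=
  ext_mem F (G r) hj

lemma extendCols_not_mem {ρ : Type*} (S : Set ι) (G : Matrix ρ ↥S F) (r : ρ) {j : ι}
    (hj : j ∉ S) : extendCols F S G r j = 0 :=
  ext_not_mem F (G r) hj

lemma sum_of_vanish [Fintype ι] (S : Set ι) (φ : ι → F) (h : ∀ j ∉ S, φ j = 0) :
    ∑ j, φ j = ∑ j : ↥S, φ j.1 := by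
  classical
  rw [← Finset.sum_subtype (p := (· ∈ S)) S.toFinset (by simp) φ]
  exact (Finset.sum_subset (Finset.subset_univ _)
    (by intro x _ hx; exact h x (by simpa using hx))).symm

lemma span_vanish (S : Set ι) (s : Set (ι → F)) (hs : ∀ v ∈ s, ∀ j ∉ S, v j = 0) :
    ∀ v ∈ Submodule.span F s, ∀ j ∉ S, v j = 0 := by
  let Z : Submodule F (ι → F) :=
    { carrier := {v | ∀ j ∉ S, v j = 0}
      add_mem' := fun ha hb j hj => by
        simp only [Pi.add_apply, ha j hj, hb j hj, add_zero]
      zero_mem' := fun j hj => rfl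
      smul_mem' := fun c v hv j hj => by
        simp only [Pi.smul_apply, hv j hj, smul_zero] }
  intro v hv
  have hle : Submodule.span F s ≤ Z := Submodule.span_le.mpr hs
  exact hle hv

lemma single_coe {S : Set ι} {inst1 : DecidableEq ι} {inst2 : DecidableEq ↥S}
    (i' j : ↥S) :
    @Pi.single ι (fun _ => F) (fun _ => inferInstance) inst1 (i' : ι) (1 : F) (j : ι) =
      @Pi.single ↥S (fun _ => F) (fun _ => inferInstance) inst2 i' (1 : F) j := by
  by_cases h : j = i'
  · subst h
    simp only [Pi.single_eq_same]
  · have hv : ¬(j : ι) = (i' : ι) := fun hc => h (Subtype.ext hc)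
    simp [h, hv]

lemma rowSpace_restrict {ρ : Type*} (G : Matrix ρ ι F) (S : Set ι) :
    rowSpace F (Matrix.of fun r (j : ↥S) => G r j.1) =
      (rowSpace F G).map (LinearMap.funLeft F F (Subtype.val : ↥S → ι)) := by
  unfold rowSpace
  rw [Submodule.map_span]
  congr 1
  ext v
  simp only [Set.mem_range, Set.mem_image]
  constructor
  · rintro ⟨r, rfl⟩
    exact ⟨fun j => G r j, ⟨r, rfl⟩, rfl⟩
  · rintro ⟨w, ⟨r, rfl⟩, rfl⟩
    exact ⟨r, rfl⟩

lemma mem_map_of_rowSpace {ρ : Type*} (G : Matrix ρ ι F) (S : Set ι) (v : ↥S → F)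
    (hv : v ∈ rowSpace F (Matrix.of fun r (j : ↥S) => G r j.1)) :
    ∃ w ∈ rowSpace F G, ∀ j : ↥S, w j.1 = v j := by
  rw [rowSpace_restrict] at hv
  obtain ⟨w, hw, hLw⟩ := Submodule.mem_map.mp hv
  exact ⟨w, hw, fun j => by rw [← hLw]; rfl⟩

lemma decode_of_part [Fintype ι] (K : ι → Set ι) {L l1 : ℕ} (P : Set ι)
    (G : Matrix (Fin L) ι F) (G1 : Matrix (Fin l1) ↥P F) (emb : Fin l1 → Fin L)
    (hrow : ∀ r j, G (emb r) j = extendCols F P G1 r j)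
    (hv1 : ValidCode F (subK K P) G1) {i : ι} (hi : i ∈ P) :
    ∃ D : (Fin L → F) → (↥(K i) → F) → F,
      ∀ x : ι → F, D (G.mulVec x) (fun j => x j.1) = x i := by
  obtain ⟨D1, hD1⟩ := hv1 ⟨i, hi⟩
  refine ⟨fun c s => D1 (fun r => c (emb r)) (fun j => s ⟨j.1.1, j.2⟩), fun x => ?_⟩
  have hc : (fun r => G.mulVec x (emb r)) = G1.mulVec (fun j : ↥P => x j.1) := by
    funext r
    show (∑ j, G (emb r) j * x j) = ∑ j : ↥P, G1 r j * x j.1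
    rw [sum_of_vanish F P (fun j => G (emb r) j * x j)
      (fun j hj => by
        show G (emb r) j * x j = 0
        rw [hrow, extendCols_not_mem F _ _ _ hj, zero_mul])]
    exact Finset.sum_congr rfl fun j _ => by rw [hrow, extendCols_mem F P G1 r j.2]
  have := hD1 (fun j : ↥P => x j.1)
  rw [← hc] at this
  exact this

lemma secure_of_parts {ρ ρ1 ρ2 : Type*} (P P' : Set ι) (hd : Disjoint P P') (A : Set ι)
    (G : Matrix ρ ι F) (G1 : Matrix ρ1 ↥P F) (G2 : Matrix ρ2 ↥P' F)
    (hrange : ∀ r, (fun j => G r j) ∈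
      Set.range (fun r j => extendCols F P G1 r j) ∪
        Set.range (fun r j => extendCols F P' G2 r j))
    (hs1 : WeaklySecure F G1 (Subtype.val ⁻¹' A))
    {i : ι} (hi : i ∈ P) (hiA : i ∉ A)
    (u : ι → F) (hu : ∀ j, u j ≠ 0 → j ∈ A) :
    u + Pi.single i 1 ∉ rowSpace F G := by
  intro hmem
  have hsub : rowSpace F G ≤
      rowSpace F (extendCols F P G1) ⊔ rowSpace F (extendCols F P' G2) := by
    unfold rowSpace
    rw [← Submodule.span_union]
    exact Submodule.span_le.mpr
      (by rintro _ ⟨r, rfl⟩; exact Submodule.subset_span (hrange r))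
  obtain ⟨a, ha, b, hb, hab⟩ := Submodule.mem_sup.mp (hsub hmem)
  have hbz : ∀ j ∉ P', b j = 0 :=
    span_vanish F P' _
      (by rintro _ ⟨r, rfl⟩; exact fun j hj => extendCols_not_mem F _ _ _ hj) b hb
  have hG1 : (Matrix.of fun r (j : ↥P) => extendCols F P G1 r j.1) = G1 := by
    funext r j
    exact extendCols_mem F P G1 r j.2
  have haz : (fun j : ↥P => a j.1) ∈ rowSpace F G1 := by
    rw [← hG1, rowSpace_restrict]
    exact Submodule.mem_map_of_mem ha
  have hres : ∀ j : ↥P, u j.1 + (Pi.single i 1 : ι → F) j.1 = a j.1 := by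
    intro j
    have h := congrFun hab j.1
    rw [Pi.add_apply, Pi.add_apply, hbz j.1 (Set.disjoint_left.mp hd j.2), add_zero] at h
    exact h.symm
  refine hs1 ⟨i, hi⟩ hiA (fun j => u j.1) (fun j hj => hu j.1 hj) ?_
  convert haz using 1
  funext j
  rw [Pi.add_apply, ← hres j]
  congr 1
  exact (single_coe F ⟨i, hi⟩ j).symm

lemma achieve_mem [Fintype ι] (P1 P2 : Set ι) (hd : Disjoint P1 P2)
    (hu : P1 ∪ P2 = Set.univ) (K : ι → Set ι) (A : Set ι) {l1 l2 : ℕ}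
    (G1 : Matrix (Fin l1) ↥P1 F) (G2 : Matrix (Fin l2) ↥P2 F)
    (hv1 : ValidCode F (subK K P1) G1) (hs1 : WeaklySecure F G1 (Subtype.val ⁻¹' A))
    (hv2 : ValidCode F (subK K P2) G2) (hs2 : WeaklySecure F G2 (Subtype.val ⁻¹' A)) :
    l1 + l2 ∈ twoLens F P1 P2 K A := by
  classical
  refine ⟨Matrix.of fun r j =>
    Sum.elim (extendCols F P1 G1) (extendCols F P2 G2) (finSumFinEquiv.symm r) j,
    ⟨{r | (finSumFinEquiv.symm r).isLeft}, ?_, ?_⟩, ?_, ?_⟩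
  · intro r hr j hj
    rcases hsr : finSumFinEquiv.symm r with a | a
    · show Sum.elim (extendCols F P1 G1) (extendCols F P2 G2) (finSumFinEquiv.symm r) j = 0
      rw [hsr]
      exact extendCols_not_mem F _ _ _ (Set.disjoint_right.mp hd hj)
    · rw [Set.mem_setOf_eq, hsr] at hr
      simp at hr
  · intro r hr j hj
    rcases hsr : finSumFinEquiv.symm r with a | a
    · rw [Set.mem_setOf_eq, hsr] at hr
      simp at hr
    · show Sum.elim (extendCols F P1 G1) (extendCols F P2 G2) (finSumFinEquiv.symm r) j = 0
      rw [hsr]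
      exact extendCols_not_mem F _ _ _ (Set.disjoint_left.mp hd hj)
  · intro i
    have hiu : i ∈ P1 ∪ P2 := by rw [hu]; trivial
    rcases hiu with hi | hi
    · refine decode_of_part F K P1 _ G1 (fun r => finSumFinEquiv (Sum.inl r))
        (fun r j => ?_) hv1 hi
      show Sum.elim (extendCols F P1 G1) (extendCols F P2 G2)
        (finSumFinEquiv.symm (finSumFinEquiv (Sum.inl r))) j = extendCols F P1 G1 r j
      rw [Equiv.symm_apply_apply]
      rfl
    · refine decode_of_part F K P2 _ G2 (fun r => finSumFinEquiv (Sum.inr r))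
        (fun r j => ?_) hv2 hi
      show Sum.elim (extendCols F P1 G1) (extendCols F P2 G2)
        (finSumFinEquiv.symm (finSumFinEquiv (Sum.inr r))) j = extendCols F P2 G2 r j
      rw [Equiv.symm_apply_apply]
      rfl
  · intro i hiA u hu'
    have hiu : i ∈ P1 ∪ P2 := by rw [hu]; trivial
    have hrange : ∀ r : Fin (l1 + l2),
        (fun j => (Matrix.of fun r j =>
          Sum.elim (extendCols F P1 G1) (extendCols F P2 G2) (finSumFinEquiv.symm r) j) r j) ∈
          Set.range (fun r j => extendCols F P1 G1 r j) ∪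
            Set.range (fun r j => extendCols F P2 G2 r j) := by
      intro r
      rcases hsr : finSumFinEquiv.symm r with a | a
      · left
        refine ⟨a, ?_⟩
        funext j
        show extendCols F P1 G1 a j =
          Sum.elim (extendCols F P1 G1) (extendCols F P2 G2) (finSumFinEquiv.symm r) j
        rw [hsr]
        rfl
      · right
        refine ⟨a, ?_⟩
        funext j
        show extendCols F P2 G2 a j =
          Sum.elim (extendCols F P1 G1) (extendCols F P2 G2) (finSumFinEquiv.symm r) j
        rw [hsr]
        rfl
    rcases hiu with hi | hi
    · exact secure_of_parts F P1 P2 hd A _ G1 G2 hrange hs1 hi hiA u hu'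
    · refine secure_of_parts F P2 P1 hd.symm A _ G2 G1 (fun r => ?_) hs2 hi hiA u hu'
      rcases hrange r with h | h
      · exact Or.inr h
      · exact Or.inl h

lemma converse_part [Fintype ι] (K : ι → Set ι) (A : Set ι) {l : ℕ} (P : Set ι)
    (G : Matrix (Fin l) ι F) (T : Set (Fin l))
    (hT : ∀ r ∈ T, ∀ j ∉ P, G r j = 0) (hTc : ∀ r ∉ T, ∀ j ∈ P, G r j = 0)
    (hvalid : ValidCode F K G) (hsec : WeaklySecure F G A) :
    Fintype.card ↥T ∈ oneLens F (subK K P) (Subtype.val ⁻¹' A) := by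
  classical
  set n := Fintype.card ↥T with hn
  let e : Fin n ≃ ↥T := (Fintype.equivFin ↥T).symm
  refine ⟨Matrix.of fun r (j : ↥P) => G (e r).1 j.1, ?_, ?_⟩
  · -- validity
    intro i'
    obtain ⟨D, hD⟩ := hvalid i'.1
    refine ⟨fun c s => D (fun r => if h : r ∈ T then c (e.symm ⟨r, h⟩) else 0)
      (fun j => if h : (j : ι) ∈ P then s ⟨⟨j.1, h⟩, j.2⟩ else 0), fun x' => ?_⟩
    set x : ι → F := Function.extend Subtype.val x' (fun _ => 0) with hxdef
    have hxmem : ∀ j (hj : j ∈ P), x j = x' ⟨j, hj⟩ := fun j hj => ext_mem F x' hj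
    have hxnot : ∀ j ∉ P, x j = 0 := fun j hj => ext_not_mem F x' hj
    have hcode : (fun r => if h : r ∈ T then
        (Matrix.of fun r (j : ↥P) => G (e r).1 j.1).mulVec x' (e.symm ⟨r, h⟩) else 0) =
        G.mulVec x := by
      funext r
      have hGr : G.mulVec x r = ∑ j : ↥P, G r j.1 * x' j := by
        show (∑ j, G r j * x j) = _
        rw [sum_of_vanish F P (fun j => G r j * x j)
          (fun j hj => by
            show G r j * x j = 0
            rw [hxnot j hj, mul_zero])]
        exact Finset.sum_congr rfl fun j _ => by rw [hxmem j.1 j.2]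
      by_cases h : r ∈ T
      · rw [dif_pos h]
        show (∑ j : ↥P, G (e (e.symm ⟨r, h⟩)).1 j.1 * x' j) = G.mulVec x r
        rw [Equiv.apply_symm_apply, hGr]
      · rw [dif_neg h, hGr]
        exact (Finset.sum_eq_zero fun j _ => by rw [hTc r h j.1 j.2, zero_mul]).symm
    have hside : (fun j : ↥(K i'.1) =>
        if h : (j : ι) ∈ P then x' ⟨j.1, h⟩ else 0) = fun j => x j.1 := by
      funext j
      by_cases h : (j : ι) ∈ P
      · rw [dif_pos h, hxmem j.1 h]
      · rw [dif_neg h, hxnot j.1 h]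
    have hfin := hD x
    rw [← hcode, ← hside] at hfin
    exact hfin.trans (hxmem i'.1 i'.2)
  · -- security
    intro i' hi' u' hu' hmem
    obtain ⟨w, hw, hLw⟩ := mem_map_of_rowSpace F
      (Matrix.of fun (r : Fin n) (j : ι) => G (e r).1 j) P
      _ (by exact hmem)
    have hwG : w ∈ rowSpace F G := by
      refine Submodule.span_mono ?_ hw
      rintro _ ⟨r, rfl⟩
      exact ⟨(e r).1, rfl⟩
    have hwz : ∀ j ∉ P, w j = 0 :=
      span_vanish F P _ (by rintro _ ⟨r, rfl⟩; exact fun j hj => hT (e r).1 (e r).2 j hj) w hw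
    have hkey : Function.extend Subtype.val u' (fun _ => 0) + Pi.single (i' : ι) 1 = w := by
      funext j
      by_cases h : j ∈ P
      · rw [Pi.add_apply, ext_mem F u' h, hLw ⟨j, h⟩, Pi.add_apply]
        congr 1
        exact single_coe F i' ⟨j, h⟩
      · rw [Pi.add_apply, ext_not_mem F u' h, hwz j h,
          Pi.single_eq_of_ne (fun hc : j = (i' : ι) => h (hc ▸ i'.2)), add_zero]
    refine hsec i'.1 hi' (Function.extend Subtype.val u' (fun _ => 0)) ?_ (hkey ▸ hwG)
    intro j hj
    by_cases h : j ∈ P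
    · refine hu' ⟨j, h⟩ ?_
      rwa [ext_mem F u' h] at hj
    · exact absurd (ext_not_mem F u' h) hj

end Helpers

/-- Lemma 6 of the paper.  For a two-sender instance with empty common
part (`P12 = ∅`, i.e. `P1 ∪ P2 = [m]`) and arbitrary (possibly cross) side information,
the optimal total length of a valid weakly secure two-sender linear code equals the sum
of the optimal lengths of the two single-sender sub-instances induced on `P1` and `P2`:
cross side information gives no advantage. -/
theorem opt_twoSender_eq_add_of_empty_common {m : ℕ}
    (P1 P2 : Set (Fin m)) (hd : Disjoint P1 P2) (hu : P1 ∪ P2 = Set.univ)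
    (K : Fin m → Set (Fin m)) (hK : ∀ i, i ∉ K i)
    (A : Set (Fin m)) (hA : A ⊂ Set.univ)
    (h1 : (oneLens F (subK K P1) (Subtype.val ⁻¹' A)).Nonempty)
    (h2 : (oneLens F (subK K P2) (Subtype.val ⁻¹' A)).Nonempty) :
    sInf (twoLens F P1 P2 K A) =
      sInf (oneLens F (subK K P1) (Subtype.val ⁻¹' A)) +
        sInf (oneLens F (subK K P2) (Subtype.val ⁻¹' A)) := by
  classical
  obtain ⟨G1, hv1, hs1⟩ := Nat.sInf_mem h1
  obtain ⟨G2, hv2, hs2⟩ := Nat.sInf_mem h2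
  have htwo := achieve_mem F P1 P2 hd hu K A G1 G2 hv1 hs1 hv2 hs2
  refine le_antisymm (Nat.sInf_le htwo) ?_
  have hne : (twoLens F P1 P2 K A).Nonempty := ⟨_, htwo⟩
  obtain ⟨G, ⟨S, hS1, hS2⟩, hv, hs⟩ := Nat.sInf_mem hne
  have hmem12 : ∀ j : Fin m, j ∈ P1 ∪ P2 := fun j => by rw [hu]; trivial
  have hc1 : Fintype.card ↥S ∈ oneLens F (subK K P1) (Subtype.val ⁻¹' A) :=
    converse_part F K A P1 G S
      (fun r hr j hj => hS1 r hr j (by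
        rcases hmem12 j with h | h
        · exact absurd h hj
        · exact h))
      (fun r hr j hj => hS2 r hr j hj) hv hs
  have hc2 : Fintype.card ↥(Sᶜ) ∈ oneLens F (subK K P2) (Subtype.val ⁻¹' A) := by
    have h := converse_part F K A P2 G Sᶜ
      (fun r hr j hj => hS2 r hr j (by
        rcases hmem12 j with h | h
        · exact h
        · exact absurd h hj))
      (fun r hr j hj => hS1 r (not_not.mp hr) j hj) hv hs
    convert h using 2
  have hcard : Fintype.card ↥S + Fintype.card ↥(Sᶜ) = sInf (twoLens F P1 P2 K A) := by
    have hcompl : Fintype.card ↥(Sᶜ) =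
        Fintype.card (Fin (sInf (twoLens F P1 P2 K A))) - Fintype.card ↥S :=
      Fintype.card_compl_set S
    have hle : Fintype.card ↥S ≤ Fintype.card (Fin (sInf (twoLens F P1 P2 K A))) :=
      Fintype.card_subtype_le _
    simp only [Fintype.card_fin] at hcompl hle
    omega
  have hadd := add_le_add (Nat.sInf_le hc1) (Nat.sInf_le hc2)
  omega
end
end

section
/- Consider a two-sender instance over a finite field F with parts P_1, P_2, P_{12}, side-information sets K_i, and eavesdropper set A, and suppose the eavesdropper knows every common message: A ∩ P_{12} = P_{12}. Let the reduced instance be the two-sender instance on P_1 ∪ P_2 obtained by deleting the coordinates P_{12}: parts (P_1, P_2, ∅), side-information sets K_i ∩ (P_1 ∪ P_2) for i ∈ P_1 ∪ P_2, and eavesdropper set A ∩ (P_1 ∪ P_2). Then the optimal codelength of the reduced instance is at most that of the original instance: l*(reduced) ≤ l*(original). In particular, given any valid weakly secure two-sender code of the form whose sender-1 rows are (G_1 | 0 | G_{12}^1) and sender-2 rows are (0 | G_2 | G_{12}^2) on the column blocks (P_1, P_2, P_{12}), the block-diagonal matrix diag(G_1, G_2) is a valid weakly secure two-sender code for the reduced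 instance. -/
open Matrix Sum

attribute [local instance] Classical.propDecidable

noncomputable section

variable (F : Type*) [Field F] [Fintype F]

lemma restrict_valid_secure {m : ℕ} (P1 P2 : Set (Fin m)) (A : Set (Fin m))
    (hPA : ∀ j, j ∉ P1 ∪ P2 → j ∈ A)
    (K : Fin m → Set (Fin m)) {ρ : Type*} (G : Matrix ρ (Fin m) F)
    (hval : ValidCode F K G) (hsec : WeaklySecure F G A) :
    ValidCode F (subK K (P1 ∪ P2)) (Matrix.of fun r (j : ↥(P1 ∪ P2)) => G r j.1) ∧
    WeaklySecure F (Matrix.of fun r (j : ↥(P1 ∪ P2)) => G r j.1)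
      (Subtype.val ⁻¹' A) := by
  set G' : Matrix ρ ↥(P1 ∪ P2) F := Matrix.of fun r (j : ↥(P1 ∪ P2)) => G r j.1 with hG'
  -- the zero-extension of a vector on the subtype
  have hmv : ∀ x : ↥(P1 ∪ P2) → F,
      G'.mulVec x = G.mulVec (fun j => if h : j ∈ P1 ∪ P2 then x ⟨j, h⟩ else 0) := by
    intro x
    funext r
    simp only [Matrix.mulVec, dotProduct]
    rw [← Finset.sum_subset (Finset.subset_univ (P1 ∪ P2).toFinset)
      (by intro j _ hj
          rw [Set.mem_toFinset] at hj
          simp [hj])]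
    rw [Finset.sum_subtype (P1 ∪ P2).toFinset (fun j => Set.mem_toFinset)
      (fun j => G r j * if h : j ∈ P1 ∪ P2 then x ⟨j, h⟩ else 0)]
    refine Finset.sum_congr rfl ?_
    intro j _
    simp [hG', j.2]
  constructor
  · -- validity
    intro i
    obtain ⟨D, hD⟩ := hval i.1
    refine ⟨fun c s => D c (fun j =>
      if h : (j : Fin m) ∈ P1 ∪ P2 then s ⟨⟨j.1, h⟩, j.2⟩ else 0), ?_⟩
    intro x
    rw [hmv]
    have := hD (fun j => if h : j ∈ P1 ∪ P2 then x ⟨j, h⟩ else 0)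
    simpa [i.2] using this
  · -- weak security
    set π : (Fin m → F) →ₗ[F] (↥(P1 ∪ P2) → F) :=
      LinearMap.funLeft F F (Subtype.val : ↥(P1 ∪ P2) → Fin m) with hπ
    have hrs : rowSpace F G' = Submodule.map π (rowSpace F G) := by
      unfold rowSpace
      rw [Submodule.map_span, ← Set.range_comp]
      rfl
    intro i hi u hu hmem
    rw [hrs, Submodule.mem_map] at hmem
    obtain ⟨v, hv, hπv⟩ := hmem
    have hiA : (i : Fin m) ∉ A := hi
    refine hsec i.1 hiA (v - Pi.single (i : Fin m) 1) ?_ ?_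
    · intro j hj
      by_cases h : j ∈ P1 ∪ P2
      · have h1 := congrFun hπv ⟨j, h⟩
        have h2 : π v ⟨j, h⟩ = v j := rfl
        rw [h2] at h1
        have hval' : ((v - Pi.single (i : Fin m) 1 : Fin m → F)) j = u ⟨j, h⟩ := by
          rw [Pi.sub_apply, h1]
          by_cases hji : j = (i : Fin m) <;>
            simp [Pi.single_apply, Subtype.ext_iff, hji]
        rw [hval'] at hj
        exact hu _ hj
      · exact hPA j h
    · convert hv using 2
      funext k
      by_cases hk : k = (i : Fin m) <;> simp [Pi.single_apply, hk]

/-- Lemma 7 of the paper.  If the eavesdropper knows every common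
message (`P12 ⊆ A`), then the optimal codelength of the reduced two-sender instance
obtained by deleting the coordinates `P12` is at most the optimal codelength of the
original instance; in particular, from any valid weakly secure two-sender code with
sender-1 rows `(G1 | 0 | G12¹)` and sender-2 rows `(0 | G2 | G12²)`, the restriction to
the columns `P1 ∪ P2` (i.e. `diag(G1, G2)`) is a valid weakly secure two-sender code for
the reduced instance. -/
theorem reduced_opt_le_of_eaves_knows_common {m : ℕ}
    (P1 P2 P12 : Set (Fin m))
    (h12 : Disjoint P1 P2) (h112 : Disjoint P1 P12) (h212 : Disjoint P2 P12)
    (hcov : P1 ∪ P2 ∪ P12 = Set.univ)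
    (K : Fin m → Set (Fin m)) (hK : ∀ i, i ∉ K i)
    (A : Set (Fin m)) (hA : A ⊂ Set.univ) (hA12 : P12 ⊆ A) :
    ((twoLens F P1 P2 K A).Nonempty →
      sInf (twoLens F (Subtype.val ⁻¹' P1 : Set ↥(P1 ∪ P2))
          (Subtype.val ⁻¹' P2) (subK K (P1 ∪ P2)) (Subtype.val ⁻¹' A)) ≤
        sInf (twoLens F P1 P2 K A)) ∧
    ∀ (l1 l2 : ℕ) (G : Matrix (Fin l1 ⊕ Fin l2) (Fin m) F),
      (∀ r, ∀ j ∈ P2, G (Sum.inl r) j = 0) →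
      (∀ r, ∀ j ∈ P1, G (Sum.inr r) j = 0) →
      ValidCode F K G → WeaklySecure F G A →
      TwoSenderForm F (Subtype.val ⁻¹' P1 : Set ↥(P1 ∪ P2)) (Subtype.val ⁻¹' P2)
          (Matrix.of fun r (j : ↥(P1 ∪ P2)) => G r j.1) ∧
        ValidCode F (subK K (P1 ∪ P2))
          (Matrix.of fun r (j : ↥(P1 ∪ P2)) => G r j.1) ∧
        WeaklySecure F (Matrix.of fun r (j : ↥(P1 ∪ P2)) => G r j.1)
          (Subtype.val ⁻¹' A) := by
  have hPA : ∀ j : Fin m, j ∉ P1 ∪ P2 → j ∈ A := by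
    intro j hj
    have : j ∈ P1 ∪ P2 ∪ P12 := hcov ▸ Set.mem_univ j
    rcases this with h | h
    · exact absurd h hj
    · exact hA12 h
  constructor
  · rintro hne
    have hmem := Nat.sInf_mem hne
    obtain ⟨G, ⟨S, hS1, hS2⟩, hval, hsec⟩ := hmem
    have hrest := restrict_valid_secure F P1 P2 A hPA K G hval hsec
    refine Nat.sInf_le ⟨Matrix.of fun r (j : ↥(P1 ∪ P2)) => G r j.1, ⟨S, ?_, ?_⟩,
      hrest.1, hrest.2⟩
    · intro r hr j hj
      exact hS1 r hr j.1 hj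
    · intro r hr j hj
      exact hS2 r hr j.1 hj
  · intro l1 l2 G h1 h2 hval hsec
    have hrest := restrict_valid_secure F P1 P2 A hPA K G hval hsec
    refine ⟨⟨Set.range Sum.inl, ?_, ?_⟩, hrest.1, hrest.2⟩
    · rintro r ⟨a, rfl⟩ j hj
      exact h1 a j.1 hj
    · intro r hr j hj
      rcases r with a | b
      · exact absurd ⟨a, rfl⟩ hr
      · exact h2 b j.1 hj
end
end
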